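/- For each fixed n ≥ 1, the sequence k ↦ i_{B'}(n,k) is log-concave: i_{B'}(n,k)^2 ≥ i_{B'}(n,k-1)·i_{B'}(n,k+1) for all 0 < k ≤ C(n,2). -/

import Mathlib

open Polynomial Finset

/-- Row generating polynomial of the over-Mahonian numbers:
`∏_{m=1}^{n-1} (1 + 2z + 2z² + ⋯ + 2zᵐ)`. -/
noncomputable def overMahonianPoly (n : ℕ) : Polynomial ℕ :=
  ∏ m ∈ Finset.Icc 1 (n - 1), (1 + 2 * ∑ j ∈ Finset.Icc 1 m, Polynomial.X ^ j)

/-- The over-Mahonian number `i_{B'}(n,k)`, with `k` an integer (zero for `k < 0`). -/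
noncomputable def overMahonianZ (n : ℕ) (k : ℤ) : ℕ :=
  if 0 ≤ k then (overMahonianPoly n).coeff k.toNat else 0

/-- The over-Mahonian number `i_{B'}(n,k)` for natural `k`. -/
noncomputable def overMahonian (n k : ℕ) : ℕ := (overMahonianPoly n).coeff k

namespace OMAux

/-- Convolution of two `ℤ`-indexed sequences supported on nonnegatives. -/
noncomputable def conv (f g : ℤ → ℤ) (k : ℤ) : ℤ :=
  ∑ i ∈ Finset.Icc 0 k, f i * g (k - i)

def ZeroNeg (f : ℤ → ℤ) : Prop := ∀ i : ℤ, i < 0 → f i = 0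
def NN (f : ℤ → ℤ) : Prop := ∀ i : ℤ, 0 ≤ f i
/-- One-step PF₂ / log-concavity condition. -/
def Step (f : ℤ → ℤ) : Prop := ∀ k l : ℤ, k ≤ l → f (k - 1) * f (l + 1) ≤ f k * f l

lemma conv_eq_sum {f g : ℤ → ℤ} (hf : ZeroNeg f) (hg : ZeroNeg g) (k : ℤ)
    {T : Finset ℤ} (hT : Finset.Icc 0 k ⊆ T) :
    ∑ i ∈ T, f i * g (k - i) = conv f g k := by
  rw [conv]
  refine (Finset.sum_subset hT ?_).symm
  intro x hxT hx
  simp only [Finset.mem_Icc, not_and_or, not_le] at hx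
  rcases hx with hx | hx
  · rw [hf x hx, zero_mul]
  · rw [hg (k - x) (by omega), mul_zero]

lemma conv_eq_sum_shift {f g : ℤ → ℤ} (hf : ZeroNeg f) (hg : ZeroNeg g) (m t : ℤ)
    {T : Finset ℤ} (hT : Finset.Icc (-t) m ⊆ T) :
    ∑ i ∈ T, f (i + t) * g (m - i) = conv f g (m + t) := by
  have h1 : ∑ x ∈ T.map (Equiv.addRight t).toEmbedding, f x * g (m + t - x)
      = ∑ i ∈ T, f (i + t) * g (m - i) := by
    rw [Finset.sum_map]
    refine Finset.sum_congr rfl fun i _ => ?_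
    simp only [Equiv.coe_toEmbedding, Equiv.coe_addRight]
    ring_nf
  rw [← h1]
  refine conv_eq_sum hf hg (m + t) ?_
  intro x hx
  simp only [Finset.mem_Icc] at hx
  rw [Finset.mem_map]
  refine ⟨x - t, hT ?_, by simp⟩
  simp only [Finset.mem_Icc]
  omega

lemma step_good {f : ℤ → ℤ} (hs : Step f) (hn : NN f) :
    ∀ (p q : ℤ) (e : ℕ), p ≤ q → f (p - e) * f (q + e) ≤ f p * f q := by
  intro p q e
  induction e with
  | zero => intro _; simp
  | succ e ih =>
    intro hpq
    have h1 : f (p - (e + 1 : ℕ)) * f (q + (e + 1 : ℕ)) ≤ f (p - e) * f (q + e) := by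
      have := hs (p - e) (q + e) (by omega)
      have e1 : (p - e) - 1 = p - ((e : ℕ) + 1 : ℕ) := by push_cast; ring
      have e2 : (q + e) + 1 = q + ((e : ℕ) + 1 : ℕ) := by push_cast; ring
      rwa [e1, e2] at this
    exact h1.trans (ih hpq)

lemma good2 {f : ℤ → ℤ} (hs : Step f) (hn : NN f) :
    ∀ w x w' x' : ℤ, w' ≤ w → w' ≤ x → w ≤ x' → x ≤ x' → w + x = w' + x' →
      f w' * f x' ≤ f w * f x := by
  intro w x w' x' h1 h2 h3 h4 h5
  rcases le_total w x with h | h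
  · have key := step_good hs hn w x (w - w').toNat h
    have e1 : w - ((w - w').toNat : ℤ) = w' := by omega
    have e2 : x + ((w - w').toNat : ℤ) = x' := by omega
    rwa [e1, e2] at key
  · have key := step_good hs hn x w (x - w').toNat h
    have e1 : x - ((x - w').toNat : ℤ) = w' := by omega
    have e2 : w + ((x - w').toNat : ℤ) = x' := by omega
    rw [e1, e2] at key
    calc f w' * f x' = f w' * f x' := rfl
      _ ≤ f x * f w := key
      _ = f w * f x := mul_comm _ _

lemma conv_nonneg {f g : ℤ → ℤ} (hf : NN f) (hg : NN g) : NN (conv f g) := by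
  intro k
  exact Finset.sum_nonneg fun i _ => mul_nonneg (hf i) (hg (k - i))

lemma conv_zeroNeg (f g : ℤ → ℤ) : ZeroNeg (conv f g) := by
  intro k hk
  rw [conv, Finset.Icc_eq_empty (by omega), Finset.sum_empty]

/-- Convolution preserves the one-step PF₂ condition. -/
lemma step_conv {f g : ℤ → ℤ} (hf0 : NN f) (hfz : ZeroNeg f) (hfs : Step f)
    (hg0 : NN g) (hgz : ZeroNeg g) (hgs : Step g) : Step (conv f g) := by
  intro k l hkl
  set d : ℤ := l - k + 1 with hd
  have hd1 : 1 ≤ d := by omega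
  set T : Finset ℤ := Finset.Icc (-d) (l + 1) with hT
  have e2 : conv f g (k - 1) = ∑ i ∈ T, f i * g (k - 1 - i) := by
    rw [← conv_eq_sum hfz hgz (k - 1) (T := T) (by intro x hx; simp only [hT, Finset.mem_Icc] at *; omega)]
  have e1 : conv f g k = ∑ i ∈ T, f i * g (k - i) := by
    rw [← conv_eq_sum hfz hgz k (T := T) (by intro x hx; simp only [hT, Finset.mem_Icc] at *; omega)]
  have e3 : conv f g l = ∑ j ∈ T, f (j + d) * g (k - 1 - j) := by
    have h := conv_eq_sum_shift hfz hgz (k - 1) d (T := T)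
      (by intro x hx; simp only [hT, Finset.mem_Icc] at *; omega)
    rw [show l = k - 1 + d by omega]
    exact h.symm
  have e4 : conv f g (l + 1) = ∑ j ∈ T, f (j + d) * g (k - j) := by
    have h := conv_eq_sum_shift hfz hgz k d (T := T)
      (by intro x hx; simp only [hT, Finset.mem_Icc] at *; omega)
    rw [show l + 1 = k + d by omega]
    exact h.symm
  rw [e1, e2, e3, e4, Finset.sum_mul_sum, Finset.sum_mul_sum]
  rw [← sub_nonneg]
  have hrw : (∑ i ∈ T, ∑ j ∈ T, f i * g (k - i) * (f (j + d) * g (k - 1 - j)))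
      - ∑ i ∈ T, ∑ j ∈ T, f i * g (k - 1 - i) * (f (j + d) * g (k - j))
      = ∑ i ∈ T, ∑ j ∈ T,
        (f i * g (k - i) * (f (j + d) * g (k - 1 - j))
          - f i * g (k - 1 - i) * (f (j + d) * g (k - j))) := by
    rw [← Finset.sum_sub_distrib]
    exact Finset.sum_congr rfl fun i _ => (Finset.sum_sub_distrib _ _).symm
  rw [hrw]
  set H : ℤ → ℤ → ℤ := fun i j =>
    f i * g (k - i) * (f (j + d) * g (k - 1 - j))
      - f i * g (k - 1 - i) * (f (j + d) * g (k - j)) with hH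
  have key : ∀ i j : ℤ, i ≤ j → 0 ≤ H i j + H j i := by
    intro i j hij
    have hA : f i * f (j + d) ≤ f (i + d) * f j :=
      good2 hfs hf0 (i + d) j i (j + d) (by omega) hij (by omega) (by omega) (by ring)
    have hC : g (k - 1 - j) * g (k - i) ≤ g (k - 1 - i) * g (k - j) :=
      good2 hgs hg0 (k - 1 - i) (k - j) (k - 1 - j) (k - i)
        (by omega) (by omega) (by omega) (by omega) (by ring)
    have hprod : 0 ≤ (f (i + d) * f j - f i * f (j + d))
        * (g (k - 1 - i) * g (k - j) - g (k - 1 - j) * g (k - i)) :=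
      mul_nonneg (by linarith) (by linarith)
    have hident : H i j + H j i = (f (i + d) * f j - f i * f (j + d))
        * (g (k - 1 - i) * g (k - j) - g (k - 1 - j) * g (k - i)) := by
      simp only [hH]; ring
    linarith [hprod, hident.ge]
  have key' : ∀ i j : ℤ, 0 ≤ H i j + H j i := by
    intro i j
    rcases le_total i j with h | h
    · exact key i j h
    · have := key j i h
      linarith
  have h2 : 0 ≤ ∑ i ∈ T, ∑ j ∈ T, (H i j + H j i) :=
    Finset.sum_nonneg fun i _ => Finset.sum_nonneg fun j _ => key' i j
  have h3 : ∑ i ∈ T, ∑ j ∈ T, (H i j + H j i)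
      = (∑ i ∈ T, ∑ j ∈ T, H i j) + ∑ i ∈ T, ∑ j ∈ T, H j i := by
    rw [← Finset.sum_add_distrib]
    refine Finset.sum_congr rfl fun i _ => Finset.sum_add_distrib
  have h4 : (∑ i ∈ T, ∑ j ∈ T, H j i) = ∑ i ∈ T, ∑ j ∈ T, H i j := Finset.sum_comm
  rw [h3, h4] at h2
  linarith

/-- Coefficients of an `ℕ`-polynomial as a `ℤ`-indexed, `ℤ`-valued sequence. -/
noncomputable def PZ (p : Polynomial ℕ) : ℤ → ℤ :=
  fun k => if 0 ≤ k then ((p.coeff k.toNat : ℕ) : ℤ) else 0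

lemma PZ_nn (p : Polynomial ℕ) : NN (PZ p) := by
  intro i; unfold PZ; split <;> positivity

lemma PZ_zeroNeg (p : Polynomial ℕ) : ZeroNeg (PZ p) := by
  intro i hi; unfold PZ; rw [if_neg (by omega)]

lemma PZ_mul (p q : Polynomial ℕ) : PZ (p * q) = conv (PZ p) (PZ q) := by
  funext k
  by_cases hk : 0 ≤ k
  · set n : ℕ := k.toNat with hn
    have hkn : k = (n : ℤ) := by omega
    rw [PZ, if_pos hk, Polynomial.coeff_mul,
      Finset.Nat.sum_antidiagonal_eq_sum_range_succ_mk]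
    push_cast
    rw [conv]
    refine (Finset.sum_nbij' (fun i : ℤ => i.toNat) (fun i : ℕ => (i : ℤ))
      ?_ ?_ ?_ ?_ ?_).symm
    · intro a ha
      simp only [Finset.mem_Icc] at ha
      simp only [Finset.mem_range]
      omega
    · intro a ha
      simp only [Finset.mem_range] at ha
      simp only [Finset.mem_Icc]
      omega
    · intro a ha
      simp only [Finset.mem_Icc] at ha
      show ((a.toNat : ℤ)) = a
      omega
    · intro a _
      show ((a : ℤ)).toNat = a
      omega
    · intro a ha
      simp only [Finset.mem_Icc] at ha
      show PZ p a * PZ q (k - a) = ((p.coeff a.toNat : ℕ) : ℤ) * ((q.coeff (n - a.toNat) : ℕ) : ℤ)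
      rw [PZ, PZ, if_pos ha.1, if_pos (by omega : (0:ℤ) ≤ k - a)]
      have h1 : (k - a).toNat = n - a.toNat := by omega
      rw [h1]
  · rw [PZ, if_neg hk, conv, Finset.Icc_eq_empty (by omega), Finset.sum_empty]

lemma PZ_one (t : ℤ) : PZ 1 t = if t = 0 then 1 else 0 := by
  rw [PZ]
  by_cases ht : 0 ≤ t
  · rw [if_pos ht, Polynomial.coeff_one]
    by_cases h0 : t = 0
    · rw [if_pos h0, if_pos (by omega)]; simp
    · rw [if_neg h0, if_neg (by omega)]; simp
  · rw [if_neg ht, if_neg (by omega)]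

lemma step_PZ_one : Step (PZ 1) := by
  intro k l hkl
  simp only [PZ_one]
  split_ifs <;> omega

lemma PZ_factor (m : ℕ) (t : ℤ) :
    PZ (1 + 2 * ∑ j ∈ Finset.Icc 1 m, Polynomial.X ^ j) t
      = if t = 0 then 1 else if 1 ≤ t ∧ t ≤ (m : ℤ) then 2 else 0 := by
  have hcoeff : ∀ u : ℕ, (1 + 2 * ∑ j ∈ Finset.Icc 1 m, (Polynomial.X : Polynomial ℕ) ^ j).coeff u
      = (if u = 0 then 1 else 0) + 2 * (if u ∈ Finset.Icc 1 m then 1 else 0) := by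
    intro u
    rw [Polynomial.coeff_add, Polynomial.coeff_one]
    congr 1
    rw [two_mul, Polynomial.coeff_add, Polynomial.finset_sum_coeff]
    have : ∑ b ∈ Finset.Icc 1 m, ((Polynomial.X : Polynomial ℕ) ^ b).coeff u
        = if u ∈ Finset.Icc 1 m then 1 else 0 := by
      rw [← Finset.sum_ite_eq (Finset.Icc 1 m) u (fun _ => (1 : ℕ))]
      refine Finset.sum_congr rfl fun b _ => ?_
      rw [Polynomial.coeff_X_pow]
    rw [this]
    omega
  rw [PZ]
  by_cases ht : 0 ≤ t
  · rw [if_pos ht, hcoeff]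
    have h0 : t.toNat = 0 ↔ t = 0 := by omega
    have h1 : t.toNat ∈ Finset.Icc 1 m ↔ 1 ≤ t ∧ t ≤ (m : ℤ) := by
      simp only [Finset.mem_Icc]; omega
    push_cast
    split_ifs with a b c d e f g h <;> first
      | rfl
      | (exfalso; simp_all; omega)
      | simp_all
      | omega
  · rw [if_neg ht, if_neg (by omega), if_neg (by omega)]

lemma step_PZ_factor (m : ℕ) :
    Step (PZ (1 + 2 * ∑ j ∈ Finset.Icc 1 m, Polynomial.X ^ j)) := by
  intro k l hkl
  simp only [PZ_factor]
  split_ifs <;> omega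

lemma step_overMahonian (n : ℕ) : Step (PZ (overMahonianPoly n)) := by
  rw [overMahonianPoly]
  refine Finset.prod_induction _ (fun q => Step (PZ q)) ?_ step_PZ_one ?_
  · intro a b ha hb
    rw [PZ_mul]
    exact step_conv (PZ_nn a) (PZ_zeroNeg a) ha (PZ_nn b) (PZ_zeroNeg b) hb
  · intro m _
    exact step_PZ_factor m

end OMAux

theorem overMahonian_log_concave (n : ℕ) (hn : 1 ≤ n) (k : ℕ) (hk0 : 0 < k)
    (hk : k ≤ n.choose 2) :
    overMahonian n (k - 1) * overMahonian n (k + 1) ≤ overMahonian n k ^ 2 := by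
  have hs := OMAux.step_overMahonian n (k : ℤ) (k : ℤ) le_rfl
  have e1 : OMAux.PZ (overMahonianPoly n) ((k : ℤ) - 1)
      = (overMahonian n (k - 1) : ℤ) := by
    rw [OMAux.PZ, if_pos (by omega)]
    have : ((k : ℤ) - 1).toNat = k - 1 := by omega
    rw [this, overMahonian]
  have e2 : OMAux.PZ (overMahonianPoly n) ((k : ℤ) + 1)
      = (overMahonian n (k + 1) : ℤ) := by
    rw [OMAux.PZ, if_pos (by omega)]
    have : ((k : ℤ) + 1).toNat = k + 1 := by omega
    rw [this, overMahonian]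
  have e3 : OMAux.PZ (overMahonianPoly n) (k : ℤ) = (overMahonian n k : ℤ) := by
    rw [OMAux.PZ, if_pos (by omega)]
    have : ((k : ℤ)).toNat = k := by omega
    rw [this, overMahonian]
  rw [e1, e2, e3] at hs
  have : (overMahonian n (k - 1) * overMahonian n (k + 1) : ℤ)
      ≤ (overMahonian n k : ℤ) ^ 2 := by
    rw [sq]; exact_mod_cast hs
  exact_mod_cast this
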